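/- If a groupoid A = (A, ω) with a p-ary operation ω satisfies the associativity identities at level 2 (i.e., all bracketings with two occurrences of ω induce the same ((2p-1)-ary) term function), then for every n, all bracketings with n occurrences of ω induce the same term function on A. -/

import Mathlib

/-- p-ary bracketings: terms over one variable `x` with one p-ary operation symbol `ω`. -/
inductive Brack (p : ℕ) : Type
  | x : Brack p
  | node : (Fin p → Brack p) → Brack p

namespace Brack

/-- occurrence number: number of occurrences of ω -/
def occ {p : ℕ} : Brack p → ℕ
  | .x => 0
  | .node f => 1 + ∑ i, occ (f i)

/-- length: number of occurrences of x -/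
def len {p : ℕ} : Brack p → ℕ
  | .x => 1
  | .node f => ∑ i, len (f i)

/-- evaluation of a bracketing in a groupoid, variables enumerated left-to-right
starting at position `j`. -/
def evalFrom {p : ℕ} {A : Type*} (op : (Fin p → A) → A) (v : ℕ → A) :
    Brack p → ℕ → A
  | .x, j => v j
  | .node f, j =>
      op (fun i => evalFrom op v (f i)
        (j + ∑ k ∈ Finset.univ.filter (· < i), len (f k)))

/-- the term function induced by a bracketing -/
def eval {p : ℕ} {A : Type*} (op : (Fin p → A) → A) (t : Brack p) (v : ℕ → A) : A :=
  evalFrom op v t 0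

/-- prefix word of a bracketing: `true` codes ω, `false` codes x -/
def word {p : ℕ} : Brack p → List Bool
  | .x => [false]
  | .node f => true :: (List.ofFn (fun i => word (f i))).flatten

/-- auxiliary: scan a word, recording 1 + number of x's before each ω -/
def STaux : List Bool → ℕ → List ℕ
  | [], _ => []
  | true :: w, c => (c + 1) :: STaux w c
  | false :: w, c => STaux w (c + 1)

/-- insertion tuple of a bracketing: the i-th entry is one plus the number
of x's preceding the i-th occurrence of ω in the prefix notation -/
def ST {p : ℕ} (t : Brack p) : List ℕ := STaux (word t) 0

/-- replace the i-th (0-based) occurrence of x in `t` by `s` -/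
def replaceLeaf {p : ℕ} : Brack p → ℕ → Brack p → Brack p
  | .x, i, s => if i = 0 then s else .x
  | .node f, i, s => .node (fun j =>
      let off := ∑ k ∈ Finset.univ.filter (· < j), len (f k)
      if off ≤ i ∧ i < off + len (f j) then replaceLeaf (f j) (i - off) s else f j)

/-- β_i : insertion of ω x … x at the i-th (1-based) occurrence of x -/
def beta {p : ℕ} (i : ℕ) (t : Brack p) : Brack p :=
  replaceLeaf t (i - 1) (.node (fun _ => .x))

/-- left depth: depth of leftmost leaf (binary case) -/
def dl : Brack 2 → ℕ
  | .x => 0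
  | .node f => dl (f 0) + 1

/-- right depth: depth of rightmost leaf (binary case) -/
def dr : Brack 2 → ℕ
  | .x => 0
  | .node f => dr (f 1) + 1

/-- left factor of a binary bracketing -/
def leftF : Brack 2 → Brack 2
  | .x => .x
  | .node f => f 0

/-- whether a bracketing is the single variable x -/
def isX {p : ℕ} : Brack p → Bool
  | .x => true
  | .node _ => false

/-- number of pairs of eggs, i.e. subterm occurrences of ω x x (binary case) -/
def eggs : Brack 2 → ℕ
  | .x => 0
  | .node f => (if isX (f 0) && isX (f 1) then 1 else 0) + eggs (f 0) + eggs (f 1)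

end Brack

/-- generalized Catalan numbers -/
def genCat (p : ℕ) : ℕ → ℕ
  | 0 => 1
  | n + 1 =>
      ∑ v ∈ (Finset.Nat.antidiagonalTuple p n).attach, ∏ k : Fin p, genCat p (v.1 k)
  decreasing_by
    have hv := Finset.Nat.mem_antidiagonalTuple.mp v.2
    have hle : v.1 k ≤ n := by
      calc v.1 k ≤ ∑ i, v.1 i :=
            Finset.single_le_sum (fun i _ => Nat.zero_le _) (Finset.mem_univ k)
        _ = n := hv
    omega

/-- the set M(n,k,p) of weakly increasing n-tuples of positive integers
with u_i ≤ (p-1)(i-1)+k (here indices are 0-based) -/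
def Mset (n k p : ℕ) : Set (Fin n → ℕ) :=
  {u | (∀ i : Fin n, 1 ≤ u i ∧ u i ≤ (p - 1) * (i : ℕ) + k) ∧
    ∀ i j : Fin n, i ≤ j → u i ≤ u j}

namespace Brack

variable {p : ℕ} {A : Type*}

/-- partial sums of lengths of children, cut at `c` -/
def Lof (f : Fin p → Brack p) (c : ℕ) : ℕ :=
  ∑ k ∈ Finset.univ.filter (fun k : Fin p => (k : ℕ) < c), len (f k)

lemma len_node (f : Fin p → Brack p) : len (.node f) = Lof f p := by
  rw [len, Lof]
  congr 1
  rw [Finset.filter_true_of_mem]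
  intro k _; exact k.isLt

lemma Lof_zero (f : Fin p → Brack p) : Lof f 0 = 0 := by simp [Lof]

lemma Lof_succ (f : Fin p → Brack p) (c : ℕ) (hc : c < p) :
    Lof f (c + 1) = Lof f c + len (f ⟨c, hc⟩) := by
  rw [Lof, Lof]
  have h : (Finset.univ.filter (fun k : Fin p => (k : ℕ) < c + 1)) =
      insert ⟨c, hc⟩ (Finset.univ.filter (fun k : Fin p => (k : ℕ) < c)) := by
    ext k
    simp [Fin.ext_iff]
    omega
  rw [h, Finset.sum_insert (by simp)]
  ring

lemma Lof_fin (f : Fin p → Brack p) (i : Fin p) :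
    (∑ k ∈ Finset.univ.filter (· < i), len (f k)) = Lof f i := by
  rw [Lof]
  congr 1

lemma evalFrom_node (op : (Fin p → A) → A) (v : ℕ → A) (f : Fin p → Brack p) (j : ℕ) :
    evalFrom op v (.node f) j = op (fun i => evalFrom op v (f i) (j + Lof f i)) := by
  rw [evalFrom]
  congr 1


lemma evalFrom_shift (op : (Fin p → A) → A) :
    ∀ (t : Brack p) (v : ℕ → A) (j : ℕ),
      evalFrom op v t j = eval op t (fun m => v (j + m)) := by
  intro t
  induction t with
  | x => intro v j; simp [evalFrom, eval]
  | node f ih =>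
      intro v j
      rw [eval, evalFrom_node, evalFrom_node]
      congr 1
      funext i
      rw [ih, ih]
      congr 1
      funext m
      congr 1
      omega

lemma eval_node (op : (Fin p → A) → A) (f : Fin p → Brack p) (v : ℕ → A) :
    eval op (.node f) v = op (fun i => eval op (f i) (fun m => v (Lof f i + m))) := by
  rw [eval, evalFrom_node]
  congr 1
  funext i
  rw [evalFrom_shift]
  congr 1
  funext m
  congr 1
  omega

lemma len_eval_occ (hp : 0 < p) : ∀ t : Brack p, len t = (p - 1) * occ t + 1 := by
  intro t
  induction t with
  | x => simp [len, occ]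
  | node f ih =>
      rw [len, occ]
      have : ∀ i : Fin p, len (f i) = (p-1) * occ (f i) + 1 := ih
      calc (∑ i, len (f i)) = ∑ i, ((p-1) * occ (f i) + 1) := by
            exact Finset.sum_congr rfl (fun i _ => ih i)
        _ = (p-1) * (∑ i, occ (f i)) + p := by
            rw [Finset.sum_add_distrib, ← Finset.mul_sum]
            simp [Finset.card_univ]
        _ = (p - 1) * (1 + ∑ i, occ (f i)) + 1 := by
            rw [Nat.mul_add, Nat.mul_one]
            omega

end Brack
namespace Brack

variable {p : ℕ} {A : Type*}

/-- substitute `σ (j + k)` for the `k`-th leaf of `t` -/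
def subst : Brack p → ℕ → (ℕ → Brack p) → Brack p
  | .x, j, σ => σ j
  | .node f, j, σ =>
      .node (fun i => subst (f i) (j + ∑ k ∈ Finset.univ.filter (· < i), len (f k)) σ)

/-- total length of the first `k` substituted terms -/
def Off (σ : ℕ → Brack p) (k : ℕ) : ℕ := ∑ m ∈ Finset.range k, len (σ m)

lemma Off_succ (σ : ℕ → Brack p) (k : ℕ) : Off σ (k + 1) = Off σ k + len (σ k) :=
  Finset.sum_range_succ _ _

lemma subst_node (f : Fin p → Brack p) (j : ℕ) (σ : ℕ → Brack p) :
    subst (.node f) j σ = .node (fun i => subst (f i) (j + Lof f i) σ) := by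
  rw [subst]
  congr 1

lemma off_Lof (σ : ℕ → Brack p) (f : Fin p → Brack p) (j : ℕ)
    (HA : ∀ (i : Fin p) (j' : ℕ), Off σ j' + len (subst (f i) j' σ) = Off σ (j' + len (f i))) :
    ∀ c, c ≤ p → Off σ (j + Lof f c) = Off σ j + Lof (fun i => subst (f i) (j + Lof f i) σ) c := by
  intro c
  induction c with
  | zero => intro _; simp [Lof_zero]
  | succ c ih =>
      intro hc
      have hcp : c < p := hc
      rw [Lof_succ _ c hcp, Lof_succ _ c hcp, ← Nat.add_assoc j, ← HA ⟨c, hcp⟩ (j + Lof f c),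
        ih (le_of_lt hcp)]
      have : Lof f ((⟨c, hcp⟩ : Fin p) : ℕ) = Lof f c := rfl
      rw [this]
      omega

lemma subst_len (σ : ℕ → Brack p) :
    ∀ (t : Brack p) (j : ℕ), Off σ j + len (subst t j σ) = Off σ (j + len t) := by
  intro t
  induction t with
  | x => intro j; rw [subst, len, Off_succ]
  | node f ih =>
      intro j
      rw [subst_node, len_node, len_node, off_Lof σ f j (fun i j' => ih i j') p le_rfl]

lemma subst_eval (op : (Fin p → A) → A) (σ : ℕ → Brack p) (w : ℕ → A) :
    ∀ (t : Brack p) (j : ℕ),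
      eval op (subst t j σ) (fun m => w (Off σ j + m)) =
      eval op t (fun k => eval op (σ (j + k)) (fun m => w (Off σ (j + k) + m))) := by
  intro t
  induction t with
  | x =>
      intro j
      rw [subst]
      show _ = eval op (σ (j + 0)) fun m => w (Off σ (j + 0) + m)
      simp
  | node f ih =>
      intro j
      rw [subst_node, eval_node, eval_node]
      congr 1
      funext i
      have hoff : Off σ j + Lof (fun i => subst (f i) (j + Lof f i) σ) i = Off σ (j + Lof f i) :=
        (off_Lof σ f j (fun i j' => subst_len σ (f i) j') i (le_of_lt i.isLt)).symm
      have e1 : (fun m => w (Off σ j + (Lof (fun i => subst (f i) (j + Lof f i) σ) i + m))) =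
          (fun m => w (Off σ (j + Lof f i) + m)) := by
        funext m
        rw [← Nat.add_assoc, hoff]
      rw [e1, ih]
      congr 1
      funext k
      rw [← Nat.add_assoc]

lemma subst_cong (op : (Fin p → A) → A) {s t : Brack p}
    (h : ∀ v, eval op s v = eval op t v) (σ : ℕ → Brack p) (w : ℕ → A) :
    eval op (subst s 0 σ) w = eval op (subst t 0 σ) w := by
  have h0 : Off σ 0 = 0 := rfl
  have hw : (fun m => w (Off σ 0 + m)) = w := by funext m; rw [h0, Nat.zero_add]
  have hs := subst_eval op σ w s 0
  have ht := subst_eval op σ w t 0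
  rw [hw] at hs ht
  rw [hs, ht]
  exact h _

lemma node_cong (op : (Fin p → A) → A) {f g : Fin p → Brack p}
    (hlen : ∀ i, len (f i) = len (g i))
    (h : ∀ i v, eval op (f i) v = eval op (g i) v) (v : ℕ → A) :
    eval op (.node f) v = eval op (.node g) v := by
  rw [eval_node, eval_node]
  congr 1
  funext i
  have : Lof f i = Lof g i :=
    Finset.sum_congr rfl (fun k _ => hlen k)
  rw [this]
  exact h i _

end Brack
namespace Brack

variable {p : ℕ} {A : Type*}

/-- left-normed powers (combs) -/
def comb : ℕ → Brack p
  | 0 => .x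
  | m + 1 => .node (fun i => if (i : ℕ) = 0 then comb m else .x)

lemma occ_comb (hp : 0 < p) : ∀ m, occ (comb m : Brack p) = m := by
  intro m
  induction m with
  | zero => rfl
  | succ m ih =>
      rw [comb, occ]
      have : ∀ i : Fin p, occ (if (i : ℕ) = 0 then (comb m : Brack p) else .x) =
          (if i = (⟨0, hp⟩ : Fin p) then m else 0) := by
        intro i
        by_cases h : (i : ℕ) = 0
        · rw [if_pos h, if_pos (Fin.ext h), ih]
        · rw [if_neg h, if_neg (fun hh => h (by rw [hh]))]
          rfl
      rw [Finset.sum_congr rfl (fun i _ => this i), Finset.sum_ite_eq' Finset.univ,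
        if_pos (Finset.mem_univ _)]
      omega

/-- the bracketing ω x … (ω x … x) … x with the inner ω in position j -/
def Tb (j : ℕ) : Brack p := .node (fun i => if (i : ℕ) = j then .node (fun _ => .x) else .x)

lemma occ_node_x : occ (.node (fun _ => .x) : Brack p) = 1 := by
  rw [occ]
  simp [occ]

lemma len_node_x (hp : 0 < p) : len (.node (fun _ => .x) : Brack p) = p := by
  rw [len]
  simp [len]

lemma occ_Tb (hp : 0 < p) (j : ℕ) (hj : j < p) : occ (Tb j : Brack p) = 2 := by
  rw [Tb, occ]
  have : ∀ i : Fin p, occ (if (i : ℕ) = j then (.node (fun _ => .x) : Brack p) else .x) =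
      (if i = (⟨j, hj⟩ : Fin p) then 1 else 0) := by
    intro i
    by_cases h : (i : ℕ) = j
    · rw [if_pos h, if_pos (Fin.ext h), occ_node_x]
    · rw [if_neg h, if_neg (fun hh => h (by rw [hh]))]
      rfl
  rw [Finset.sum_congr rfl (fun i _ => this i), Finset.sum_ite_eq' Finset.univ,
    if_pos (Finset.mem_univ _)]

lemma Lof_Tb (hp : 0 < p) (j : ℕ) (hj : j < p) :
    ∀ c, c ≤ p →
      Lof (fun i : Fin p => if (i : ℕ) = j then (.node (fun _ => .x) : Brack p) else .x) c =
        c + (if j < c then p - 1 else 0) := by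
  intro c
  induction c with
  | zero => intro _; simp [Lof_zero]
  | succ c ih =>
      intro hc
      have hcp : c < p := hc
      rw [Lof_succ _ c hcp, ih (le_of_lt hcp)]
      by_cases h : (c : ℕ) = j
      · rw [if_pos h, len_node_x hp]
        subst h
        simp
        omega
      · rw [if_neg h]
        show _ = _
        have : len (.x : Brack p) = 1 := rfl
        rw [this]
        by_cases h2 : j < c
        · rw [if_pos h2, if_pos (by omega)]
          omega
        · rw [if_neg h2, if_neg (by omega)]

lemma Lof_x (c : ℕ) (hc : c ≤ p) : Lof (fun _ : Fin p => (.x : Brack p)) c = c := by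
  induction c with
  | zero => simp [Lof_zero]
  | succ c ih =>
      rw [Lof_succ _ c hc]
      rw [ih (by omega)]
      rfl

lemma subst_Tb (hp : 0 < p) (j : ℕ) (hj : j < p) (σ : ℕ → Brack p) :
    subst (Tb j) 0 σ = .node (fun i : Fin p =>
      if (i : ℕ) = j then .node (fun i' : Fin p => σ (j + (i' : ℕ)))
      else if (i : ℕ) < j then σ i else σ ((i : ℕ) + p - 1)) := by
  rw [Tb, subst_node]
  congr 1
  funext i
  rw [Lof_Tb hp j hj i (le_of_lt i.isLt), Nat.zero_add]
  by_cases h : (i : ℕ) = j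
  · rw [if_pos h, if_pos h]
    have hij : ¬ (j < (i : ℕ)) := by omega
    rw [if_neg hij, Nat.add_zero, subst_node]
    congr 1
    funext i'
    rw [Lof_x i' (le_of_lt i'.isLt), subst, h]
  · rw [if_neg h, if_neg h]
    by_cases h2 : (i : ℕ) < j
    · rw [if_pos h2, if_neg (by omega), Nat.add_zero, subst]
    · rw [if_neg h2, if_pos (by omega), subst]
      congr 1
      omega

end Brack
namespace Brack

variable {p : ℕ} {A : Type*}

lemma merge (op : (Fin p → A) → A) (hp : 0 < p)
    (h2 : ∀ s t : Brack p, occ s = 2 → occ t = 2 →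
      ∀ v : ℕ → A, eval op s v = eval op t v) :
    ∀ (m : ℕ) (n : Fin p → ℕ),
      (∑ k ∈ Finset.univ.filter (fun k : Fin p => 0 < (k : ℕ)), n k) = m →
      ∀ v, eval op (.node (fun i => comb (n i))) v = eval op (comb (1 + ∑ i, n i)) v := by
  intro m
  induction m with
  | zero =>
      intro n hsum v
      have hz : ∀ k : Fin p, 0 < (k : ℕ) → n k = 0 := by
        intro k hk
        have := (Finset.sum_eq_zero_iff.mp hsum) k (by simp [hk])
        exact this
      have hsum0 : (∑ i, n i) = n ⟨0, hp⟩ := by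
        apply Finset.sum_eq_single
        · intro b _ hb
          apply hz
          have : (b : ℕ) ≠ 0 := fun h => hb (Fin.ext h)
          omega
        · intro h; exact absurd (Finset.mem_univ _) h
      have key : (comb (1 + ∑ i, n i) : Brack p) = .node (fun i => comb (n i)) := by
        rw [hsum0, Nat.add_comm]
        show (comb (n ⟨0, hp⟩ + 1) : Brack p) = _
        rw [comb]
        congr 1
        funext i
        by_cases h : (i : ℕ) = 0
        · rw [if_pos h]
          congr 1
          exact congrArg n (Fin.ext h.symm)
        · rw [if_neg h, hz i (by omega)]
          rfl
      rw [key]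
  | succ m ih =>
      intro n hsum v
      set F := Finset.univ.filter (fun k : Fin p => 0 < (k : ℕ) ∧ n k ≠ 0) with hFdef
      have hF : F.Nonempty := by
        rcases Finset.eq_empty_or_nonempty F with hFe | hF
        · exfalso
          have : (∑ k ∈ Finset.univ.filter (fun k : Fin p => 0 < (k : ℕ)), n k) = 0 := by
            apply Finset.sum_eq_zero
            intro k hk
            simp only [Finset.mem_filter, Finset.mem_univ, true_and] at hk
            by_contra hnk
            have hkF : k ∈ F := by
              rw [hFdef]; simp only [Finset.mem_filter, Finset.mem_univ, true_and]
              exact ⟨hk, hnk⟩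
            rw [hFe] at hkF
            simp at hkF
          omega
        · exact hF
      set j := F.max' hF with hjdef
      have hjF : j ∈ F := F.max'_mem hF
      have hj1 : 0 < (j : ℕ) := by
        have := hjF; rw [hFdef] at this
        simp only [Finset.mem_filter, Finset.mem_univ, true_and] at this
        exact this.1
      have hjn : n j ≠ 0 := by
        have := hjF; rw [hFdef] at this
        simp only [Finset.mem_filter, Finset.mem_univ, true_and] at this
        exact this.2
      have hmax : ∀ k : Fin p, (j : ℕ) < (k : ℕ) → n k = 0 := by
        intro k hk
        by_contra hnk
        have hkF : k ∈ F := by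
          rw [hFdef]; simp only [Finset.mem_filter, Finset.mem_univ, true_and]
          exact ⟨by omega, hnk⟩
        have := F.le_max' k hkF
        rw [← hjdef] at this
        have : (k : ℕ) ≤ (j : ℕ) := this
        omega
      set jn := (j : ℕ) with hjndef
      set b := n j - 1 with hbdef
      set nn : ℕ → ℕ := fun k => if h : k < p then n ⟨k, h⟩ else 0 with hnndef
      set σ : ℕ → Brack p := fun k =>
        if k < jn then comb (nn k)
        else if k = jn then comb b
        else if k < jn + p then .x
        else comb (nn (k - (p - 1))) with hσdef
      set n'' : Fin p → ℕ := fun i =>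
        if (i : ℕ) < jn then n i else if (i : ℕ) = jn then b else 0 with hn''def
      have hji : jn < p := j.isLt
      have hnn : ∀ i : Fin p, nn (i : ℕ) = n i := by
        intro i
        simp only [hnndef]
        rw [dif_pos i.isLt]
      have hσ1 : ∀ k, k < jn → σ k = comb (nn k) := by
        intro k hk; simp only [hσdef]; rw [if_pos hk]
      have hσ2 : σ jn = comb b := by
        simp only [hσdef]; rw [if_neg (by omega)]; simp
      have hσ3 : ∀ k, jn < k → k < jn + p → σ k = .x := by
        intro k hk1 hk2; simp only [hσdef]
        rw [if_neg (by omega), if_neg (by omega), if_pos hk2]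
      have hσ4 : ∀ k, jn + p ≤ k → σ k = comb (nn (k - (p - 1))) := by
        intro k hk; simp only [hσdef]
        rw [if_neg (by omega), if_neg (by omega), if_neg (by omega)]
      have hn''1 : ∀ i : Fin p, (i : ℕ) < jn → n'' i = n i := by
        intro i hi; simp only [hn''def]; rw [if_pos hi]
      have hn''2 : ∀ i : Fin p, (i : ℕ) = jn → n'' i = b := by
        intro i hi; simp only [hn''def]; rw [if_neg (by omega), if_pos hi]
      have hn''3 : ∀ i : Fin p, jn < (i : ℕ) → n'' i = 0 := by
        intro i hi; simp only [hn''def]; rw [if_neg (by omega), if_neg (by omega)]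
      -- E1
      have E1 : subst (Tb jn) 0 σ = (.node (fun i => comb (n i)) : Brack p) := by
        rw [subst_Tb hp jn hji σ]
        congr 1
        funext i
        by_cases h : (i : ℕ) = jn
        · rw [if_pos h]
          have hni : n i = b + 1 := by
            have : i = j := Fin.ext h
            rw [this]; omega
          rw [hni, comb]
          congr 1
          funext i'
          by_cases h' : (i' : ℕ) = 0
          · rw [if_pos h', h', Nat.add_zero, hσ2]
          · rw [if_neg h', hσ3 _ (by omega) (by have := i'.isLt; omega)]
        · rw [if_neg h]
          by_cases h2' : (i : ℕ) < jn
          · rw [if_pos h2', hσ1 _ h2', hnn]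
          · have hgt : jn < (i : ℕ) := by omega
            rw [if_neg h2', hσ4 _ (by omega)]
            have harith : (i : ℕ) + p - 1 - (p - 1) = (i : ℕ) := by omega
            rw [harith, hnn]
      -- E2
      have E2 : subst (Tb 0) 0 σ =
          (.node (fun i : Fin p => if (i : ℕ) = 0 then
            .node (fun i' : Fin p => comb (n'' i')) else .x) : Brack p) := by
        rw [subst_Tb hp 0 hp σ]
        congr 1
        funext i
        by_cases h : (i : ℕ) = 0
        · rw [if_pos h, if_pos h]
          congr 1
          funext i'
          rw [Nat.zero_add]
          by_cases h1 : (i' : ℕ) < jn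
          · rw [hσ1 _ h1, hnn, hn''1 _ h1]
          · by_cases h2' : (i' : ℕ) = jn
            · rw [h2', hσ2, hn''2 _ h2']
            · rw [hσ3 _ (by omega) (by have := i'.isLt; omega), hn''3 _ (by omega)]
              rfl
        · rw [if_neg h, if_neg h, if_neg (by omega : ¬ ((i : ℕ) < 0))]
          by_cases h3 : (i : ℕ) + p - 1 < jn + p
          · rw [hσ3 _ (by omega) h3]
          · have hgt : jn < (i : ℕ) := by omega
            have harith : (i : ℕ) + p - 1 - (p - 1) = (i : ℕ) := by omega
            rw [hσ4 _ (by omega), harith, hnn, hmax i hgt]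
            rfl
      -- pointwise relation between n and n''
      have hterm : ∀ k : Fin p, n k = n'' k + (if k = j then 1 else 0) := by
        intro k
        rw [hn''def]
        simp only
        by_cases h1 : (k : ℕ) < jn
        · rw [if_pos h1, if_neg (by intro hh; rw [hh] at h1; omega)]
          omega
        · by_cases h2' : (k : ℕ) = jn
          · have : k = j := Fin.ext h2'
            rw [if_neg h1, if_pos h2', if_pos this, this]
            omega
          · have : ¬ (k = j) := fun hh => h2' (by rw [hh])
            rw [if_neg h1, if_neg h2', if_neg this, hmax k (by omega)]
      -- tail sum of n''
      have htail'' : (∑ k ∈ Finset.univ.filter (fun k : Fin p => 0 < (k : ℕ)), n'' k) = m := by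
        have hsplit : (∑ k ∈ Finset.univ.filter (fun k : Fin p => 0 < (k : ℕ)), n k) =
            (∑ k ∈ Finset.univ.filter (fun k : Fin p => 0 < (k : ℕ)), n'' k) +
            (∑ k ∈ Finset.univ.filter (fun k : Fin p => 0 < (k : ℕ)),
              (if k = j then 1 else 0)) := by
          rw [← Finset.sum_add_distrib]
          exact Finset.sum_congr rfl (fun k _ => hterm k)
        have hind : (∑ k ∈ Finset.univ.filter (fun k : Fin p => 0 < (k : ℕ)),
            (if k = j then 1 else 0)) = 1 := by
          rw [Finset.sum_ite_eq' _ j (fun _ => 1), if_pos (by simp; exact hj1)]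
        omega
      have step2 := ih n'' htail''
      -- step1 : use h2 via substitution
      have step1 : eval op (.node (fun i => comb (n i)) : Brack p) v =
          eval op (.node (fun i : Fin p => if (i : ℕ) = 0 then
            .node (fun i' : Fin p => comb (n'' i')) else .x) : Brack p) v := by
        rw [← E1, ← E2]
        exact subst_cong op
          (fun w => h2 (Tb jn) (Tb 0) (occ_Tb hp jn hji) (occ_Tb hp 0 hp) w) σ v
      -- occurrence bookkeeping
      have hocc_inner : occ (.node (fun i' : Fin p => comb (n'' i')) : Brack p) =
          1 + ∑ i, n'' i := by
        rw [occ]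
        congr 1
        exact Finset.sum_congr rfl (fun i _ => occ_comb hp (n'' i))
      -- step3 : inner congruence
      have step3 : eval op (.node (fun i : Fin p => if (i : ℕ) = 0 then
            .node (fun i' : Fin p => comb (n'' i')) else .x) : Brack p) v =
          eval op (.node (fun i : Fin p => if (i : ℕ) = 0 then
            comb (1 + ∑ i, n'' i) else .x) : Brack p) v := by
        apply node_cong
        · intro i
          by_cases h : (i : ℕ) = 0
          · rw [if_pos h, if_pos h, len_eval_occ hp, len_eval_occ hp, hocc_inner,
              occ_comb hp]
          · rw [if_neg h, if_neg h]
        · intro i w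
          by_cases h : (i : ℕ) = 0
          · rw [if_pos h, if_pos h]
            exact step2 w
          · rw [if_neg h, if_neg h]
      -- final syntactic identification
      have hsum2 : (∑ i, n i) = (∑ i, n'' i) + 1 := by
        have hsplit : (∑ i, n i) = (∑ i, n'' i) + (∑ i : Fin p, (if i = j then 1 else 0)) := by
          rw [← Finset.sum_add_distrib]
          exact Finset.sum_congr rfl (fun k _ => hterm k)
        rw [hsplit, Finset.sum_ite_eq' _ j (fun _ => 1), if_pos (Finset.mem_univ _)]
      have E3 : (.node (fun i : Fin p => if (i : ℕ) = 0 then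
            comb (1 + ∑ i, n'' i) else .x) : Brack p) = comb (1 + ∑ i, n i) := by
        rw [hsum2]
        have : 1 + ((∑ i, n'' i) + 1) = (1 + ∑ i, n'' i) + 1 := by omega
        rw [this]
        rw [comb]
      rw [step1, step3, E3]

end Brack
namespace Brack

lemma to_comb {p : ℕ} {A : Type*} (op : (Fin p → A) → A) (hp : 0 < p)
    (h2 : ∀ s t : Brack p, occ s = 2 → occ t = 2 →
      ∀ v : ℕ → A, eval op s v = eval op t v) :
    ∀ (t : Brack p) (v : ℕ → A), eval op t v = eval op (comb (occ t)) v := by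
  intro t
  induction t with
  | x => intro v; rfl
  | node f ih =>
      intro v
      have step1 : eval op (.node f) v = eval op (.node fun i => comb (occ (f i))) v :=
        node_cong op
          (fun i => by rw [len_eval_occ hp, len_eval_occ hp, occ_comb hp])
          (fun i w => ih i w) v
      have step2 := merge op hp h2 _ (fun i => occ (f i)) rfl v
      have hocc : occ (.node f : Brack p) = 1 + ∑ i, occ (f i) := by rw [occ]
      rw [step1, step2, hocc]

end Brack

theorem stmt_12 (p : ℕ) (hp : 2 ≤ p) (A : Type*) (op : (Fin p → A) → A)
    (h2 : ∀ s t : Brack p, Brack.occ s = 2 → Brack.occ t = 2 →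
      ∀ v : ℕ → A, Brack.eval op s v = Brack.eval op t v) :
    ∀ (n : ℕ) (s t : Brack p), Brack.occ s = n → Brack.occ t = n →
      ∀ v : ℕ → A, Brack.eval op s v = Brack.eval op t v := by
  intro n s t hs ht v
  have hp0 : 0 < p := by omega
  rw [Brack.to_comb op hp0 h2 s v, Brack.to_comb op hp0 h2 t v, hs, ht]
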